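/- Every finite stochastic matrix (p_{i,j})_{i,j∈I} admits at least one invariant probability distribution, i.e., a vector (π_i) with π_i ≥ 0, Σ_i π_i = 1, and π_j = Σ_i π_i p_{i,j} for all j. -/

import Mathlib

/-- Every finite stochastic matrix admits at least one invariant
probability distribution. -/
theorem stmt_6 {I : Type*} [Fintype I] [Nonempty I]
    (P : I → I → ℝ)
    (hPnonneg : ∀ i j, 0 ≤ P i j)
    (hProw : ∀ i, ∑ j, P i j = 1) :
    ∃ π : I → ℝ, (∀ i, 0 ≤ π i) ∧ (∑ i, π i = 1) ∧
      ∀ j, π j = ∑ i, π i * P i j := by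
  classical
  set T : (I → ℝ) → I → ℝ := fun π j => ∑ i, π i * P i j with hT
  have hTcont : Continuous T := by
    apply continuous_pi; intro j
    exact continuous_finset_sum _ fun i _ => (continuous_apply i).mul continuous_const
  have hTmem : ∀ π ∈ stdSimplex ℝ I, T π ∈ stdSimplex ℝ I := by
    rintro π ⟨h0, h1⟩
    refine ⟨fun j => Finset.sum_nonneg fun i _ => mul_nonneg (h0 i) (hPnonneg i j), ?_⟩
    simp only [hT]
    rw [Finset.sum_comm]
    simp [← Finset.mul_sum, hProw, h1]
  set π0 : I → ℝ := fun _ => (Fintype.card I : ℝ)⁻¹ with hπ0def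
  have hcard : (0 : ℝ) < (Fintype.card I : ℝ) := by
    exact_mod_cast Fintype.card_pos
  have hπ0 : π0 ∈ stdSimplex ℝ I := by
    refine ⟨fun i => by positivity, ?_⟩
    simp [hπ0def, Finset.sum_const, hcard.ne']
  set μ : ℕ → I → ℝ := fun n => T^[n] π0 with hμdef
  have hμmem : ∀ n, μ n ∈ stdSimplex ℝ I := by
    intro n
    induction n with
    | zero => exact hπ0
    | succ n ih =>
      have : μ (n + 1) = T (μ n) := Function.iterate_succ_apply' T n π0
      rw [this]; exact hTmem _ ih
  have hμsucc : ∀ n, μ (n + 1) = T (μ n) := fun n => Function.iterate_succ_apply' T n π0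
  set a : ℕ → I → ℝ := fun n j => ((n : ℝ) + 1)⁻¹ * ∑ k ∈ Finset.range (n + 1), μ k j
    with hadef
  have hn1 : ∀ n : ℕ, (0 : ℝ) < (n : ℝ) + 1 := fun n => by positivity
  have hamem : ∀ n, a n ∈ stdSimplex ℝ I := by
    intro n
    constructor
    · intro j
      exact mul_nonneg (by positivity)
        (Finset.sum_nonneg fun k _ => (hμmem k).1 j)
    · simp only [hadef]
      rw [← Finset.mul_sum, Finset.sum_comm]
      have : ∀ k ∈ Finset.range (n + 1), ∑ j, μ k j = 1 := fun k _ => (hμmem k).2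
      rw [Finset.sum_congr rfl this]
      simp [(hn1 n).ne']
  -- T (a n) - a n = (n+1)⁻¹ • (μ (n+1) - μ 0)
  have key : ∀ n j, T (a n) j - a n j = ((n : ℝ) + 1)⁻¹ * (μ (n + 1) j - μ 0 j) := by
    intro n j
    have hstep : ∀ k, μ (k + 1) j = ∑ i, μ k i * P i j := fun k => by
      rw [hμsucc k]
    have hTa : T (a n) j = ((n : ℝ) + 1)⁻¹ * ∑ k ∈ Finset.range (n + 1), μ (k + 1) j := by
      calc T (a n) j
          = ∑ i, (((n : ℝ) + 1)⁻¹ * ∑ k ∈ Finset.range (n + 1), μ k i) * P i j := rfl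
        _ = ∑ i, ((n : ℝ) + 1)⁻¹ * ∑ k ∈ Finset.range (n + 1), μ k i * P i j := by
            refine Finset.sum_congr rfl fun i _ => ?_
            rw [mul_assoc, Finset.sum_mul]
        _ = ((n : ℝ) + 1)⁻¹ * ∑ i, ∑ k ∈ Finset.range (n + 1), μ k i * P i j := by
            rw [Finset.mul_sum]
        _ = ((n : ℝ) + 1)⁻¹ * ∑ k ∈ Finset.range (n + 1), ∑ i, μ k i * P i j := by
            rw [Finset.sum_comm]
        _ = ((n : ℝ) + 1)⁻¹ * ∑ k ∈ Finset.range (n + 1), μ (k + 1) j := by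
            congr 1
            exact Finset.sum_congr rfl fun k _ => (hstep k).symm
    rw [hTa]
    simp only [hadef]
    rw [← mul_sub, ← Finset.sum_sub_distrib]
    congr 1
    exact Finset.sum_range_sub (fun k => μ k j) (n + 1)
  -- bound
  have hbound : ∀ n j, |T (a n) j - a n j| ≤ ((n : ℝ) + 1)⁻¹ := by
    intro n j
    rw [key n j, abs_mul, abs_of_pos (inv_pos.2 (hn1 n))]
    have h1 : μ (n + 1) j ≤ 1 := by
      have := (hμmem (n + 1)).2
      calc μ (n + 1) j ≤ ∑ i, μ (n + 1) i :=
            Finset.single_le_sum (fun i _ => (hμmem (n + 1)).1 i) (Finset.mem_univ j)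
        _ = 1 := this
    have h2 : μ 0 j ≤ 1 := by
      calc μ 0 j ≤ ∑ i, μ 0 i :=
            Finset.single_le_sum (fun i _ => (hμmem 0).1 i) (Finset.mem_univ j)
        _ = 1 := (hμmem 0).2
    have habs : |μ (n + 1) j - μ 0 j| ≤ 1 := by
      rw [abs_sub_le_iff]
      constructor <;> nlinarith [(hμmem (n + 1)).1 j, (hμmem 0).1 j]
    calc ((n : ℝ) + 1)⁻¹ * |μ (n + 1) j - μ 0 j| ≤ ((n : ℝ) + 1)⁻¹ * 1 :=
          mul_le_mul_of_nonneg_left habs (by positivity)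
      _ = ((n : ℝ) + 1)⁻¹ := mul_one _
  -- extract convergent subsequence
  obtain ⟨π, hπS, φ, hφ, hconv⟩ := (isCompact_stdSimplex ℝ I).tendsto_subseq hamem
  refine ⟨π, hπS.1, hπS.2, ?_⟩
  intro j
  have hconvj : Filter.Tendsto (fun n => a (φ n) j) Filter.atTop (nhds (π j)) :=
    ((continuous_apply j).continuousAt.tendsto).comp hconv
  have hTconvj : Filter.Tendsto (fun n => T (a (φ n)) j) Filter.atTop (nhds (T π j)) :=
    ((continuous_apply j).comp hTcont).continuousAt.tendsto.comp hconv
  have hdiff : Filter.Tendsto (fun n => T (a (φ n)) j - a (φ n) j) Filter.atTop (nhds 0) := by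
    have h0 : Filter.Tendsto (fun n : ℕ => ((n : ℝ) + 1)⁻¹) Filter.atTop (nhds 0) := by
      simpa using tendsto_one_div_add_atTop_nhds_zero_nat (𝕜 := ℝ)
    exact squeeze_zero_norm (fun n => hbound (φ n) j) (h0.comp hφ.tendsto_atTop)
  have := (hTconvj.sub hconvj)
  have heq : T π j - π j = 0 := tendsto_nhds_unique this hdiff
  have : π j = T π j := by linarith
  simpa [hT] using this
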